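/- If G is a claw-free graph and X ⊆ V(G) induces a triangle-free subgraph, then |X| ≤ 5·γ(G). -/
import Mathlib


open Finset

variable {V : Type*}

/-- A finset is independent in `G` : no two of its vertices are adjacent. -/
def IsIndepFinset (G : SimpleGraph V) (S : Finset V) : Prop :=
  ∀ u ∈ S, ∀ v ∈ S, ¬ G.Adj u v

/-- A finset dominates `G` : every vertex outside it has a neighbour inside it. -/
def IsDomFinset (G : SimpleGraph V) (D : Finset V) : Prop :=
  ∀ v, v ∉ D → ∃ u ∈ D, G.Adj u v

/-- The independence number of `G`. -/
noncomputable def indepNum [Fintype V] (G : SimpleGraph V) : ℕ :=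
  sSup {n | ∃ S : Finset V, IsIndepFinset G S ∧ S.card = n}

/-- The domination number of `G`. -/
noncomputable def domNum [Fintype V] (G : SimpleGraph V) : ℕ :=
  sInf {n | ∃ D : Finset V, IsDomFinset G D ∧ D.card = n}

/-- `G` is `K_{1,r}`-free: no vertex has `r` pairwise nonadjacent neighbours. -/
def K1rFree (G : SimpleGraph V) (r : ℕ) : Prop :=
  ¬ ∃ (v : V) (A : Finset V), (∀ a ∈ A, G.Adj v a) ∧
      (∀ a ∈ A, ∀ b ∈ A, a ≠ b → ¬ G.Adj a b) ∧ A.card = r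

/-- Extract three distinct elements from a finset of size at least 3. -/
lemma three_of_card (S : Finset V) (h : 3 ≤ S.card) :
    ∃ a ∈ S, ∃ b ∈ S, ∃ c ∈ S, a ≠ b ∧ a ≠ c ∧ b ≠ c := by
  classical
  obtain ⟨t, hts, ht3⟩ := Finset.exists_subset_card_eq h
  obtain ⟨a, b, c, hab, hac, hbc, ht⟩ := Finset.card_eq_three.mp ht3
  rw [ht] at hts
  exact ⟨a, hts (by simp), b, hts (by simp), c, hts (by simp), hab, hac, hbc⟩

/-- Ramsey R(3,3) ≤ 6 : a set with no triangle and no independent triple has ≤ 5 elements. -/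
lemma ramsey33 (G : SimpleGraph V) (S : Finset V)
    (h1 : ∀ a ∈ S, ∀ b ∈ S, ∀ c ∈ S, a ≠ b → a ≠ c → b ≠ c →
      ¬ (G.Adj a b ∧ G.Adj a c ∧ G.Adj b c))
    (h2 : ∀ a ∈ S, ∀ b ∈ S, ∀ c ∈ S, a ≠ b → a ≠ c → b ≠ c →
      ¬ (¬ G.Adj a b ∧ ¬ G.Adj a c ∧ ¬ G.Adj b c)) :
    S.card ≤ 5 := by
  classical
  by_contra hlt
  push_neg at hlt
  have h6 : 6 ≤ S.card := hlt
  obtain ⟨v, hv⟩ := Finset.card_pos.mp (show 0 < S.card by omega)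
  set T := S.erase v with hT
  have hTcard : 5 ≤ T.card := by
    have hTc : T.card = S.card - 1 := by rw [hT]; exact Finset.card_erase_of_mem hv
    omega
  set A := T.filter (fun x => G.Adj v x) with hA
  set B := T.filter (fun x => ¬ G.Adj v x) with hB
  have hsum : A.card + B.card = T.card := Finset.card_filter_add_card_filter_not _
  have hAS : ∀ x ∈ A, x ∈ S ∧ x ≠ v ∧ G.Adj v x := by
    intro x hx
    rw [hA, Finset.mem_filter] at hx
    exact ⟨Finset.mem_of_mem_erase hx.1, Finset.ne_of_mem_erase hx.1, hx.2⟩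
  have hBS : ∀ x ∈ B, x ∈ S ∧ x ≠ v ∧ ¬ G.Adj v x := by
    intro x hx
    rw [hB, Finset.mem_filter] at hx
    exact ⟨Finset.mem_of_mem_erase hx.1, Finset.ne_of_mem_erase hx.1, hx.2⟩
  rcases (by omega : 3 ≤ A.card ∨ 3 ≤ B.card) with h3 | h3
  · obtain ⟨a, ha, b, hb, c, hc, hab, hac, hbc⟩ := three_of_card A h3
    obtain ⟨haS, hav, hva⟩ := hAS a ha
    obtain ⟨hbS, hbv, hvb⟩ := hAS b hb
    obtain ⟨hcS, hcv, hvc⟩ := hAS c hc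
    by_cases e1 : G.Adj a b
    · exact h1 v hv a haS b hbS (Ne.symm hav) (Ne.symm hbv) hab ⟨hva, hvb, e1⟩
    by_cases e2 : G.Adj a c
    · exact h1 v hv a haS c hcS (Ne.symm hav) (Ne.symm hcv) hac ⟨hva, hvc, e2⟩
    by_cases e3 : G.Adj b c
    · exact h1 v hv b hbS c hcS (Ne.symm hbv) (Ne.symm hcv) hbc ⟨hvb, hvc, e3⟩
    exact h2 a haS b hbS c hcS hab hac hbc ⟨e1, e2, e3⟩
  · obtain ⟨a, ha, b, hb, c, hc, hab, hac, hbc⟩ := three_of_card B h3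
    obtain ⟨haS, hav, hva⟩ := hBS a ha
    obtain ⟨hbS, hbv, hvb⟩ := hBS b hb
    obtain ⟨hcS, hcv, hvc⟩ := hBS c hc
    by_cases e1 : G.Adj a b
    · by_cases e2 : G.Adj a c
      · by_cases e3 : G.Adj b c
        · exact h1 a haS b hbS c hcS hab hac hbc ⟨e1, e2, e3⟩
        · exact h2 v hv b hbS c hcS (Ne.symm hbv) (Ne.symm hcv) hbc ⟨hvb, hvc, e3⟩
      · exact h2 v hv a haS c hcS (Ne.symm hav) (Ne.symm hcv) hac ⟨hva, hvc, e2⟩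
    · exact h2 v hv a haS b hbS (Ne.symm hav) (Ne.symm hbv) hab ⟨hva, hvb, e1⟩

/-- In a claw-free graph, a vertex set inducing a triangle-free subgraph has
size at most 5·γ(G). -/
theorem stmt13 [Fintype V] (G : SimpleGraph V) (hG : K1rFree G 3)
    (X : Finset V)
    (hX : ∀ a ∈ X, ∀ b ∈ X, ∀ c ∈ X, G.Adj a b → G.Adj b c → ¬ G.Adj a c) :
    X.card ≤ 5 * domNum G := by
  classical
  -- obtain an optimal dominating set
  have hne : {n | ∃ D : Finset V, IsDomFinset G D ∧ D.card = n}.Nonempty :=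
    ⟨Finset.univ.card, Finset.univ, fun v hv => absurd (Finset.mem_univ v) hv, rfl⟩
  obtain ⟨D, hDdom, hDcard⟩ := Nat.sInf_mem hne
  -- assign each vertex of X to a dominating vertex
  set f : V → V := fun x =>
    if x ∈ D then x else if h : ∃ u ∈ D, G.Adj u x then h.choose else x with hf
  have hfD : ∀ x ∈ X, f x ∈ D := by
    intro x hx
    simp only [hf]
    by_cases hxD : x ∈ D
    · simp [hxD]
    · have h : ∃ u ∈ D, G.Adj u x := hDdom x hxD
      simp only [hxD, if_false, dif_pos h]
      exact h.choose_spec.1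
  have key : X.card = ∑ d ∈ D, (X.filter (fun x => f x = d)).card :=
    Finset.card_eq_sum_card_fiberwise hfD
  have fiber_le : ∀ d ∈ D, (X.filter (fun x => f x = d)).card ≤ 5 := by
    intro d hd
    set F := X.filter (fun x => f x = d) with hF
    set N := X.filter (fun x => G.Adj d x) with hN
    -- every element of the fiber is d itself or an X-neighbour of d
    have hFsub : F ⊆ insert d N := by
      intro x hx
      rw [hF, Finset.mem_filter] at hx
      obtain ⟨hxX, hxf⟩ := hx
      by_cases hxD : x ∈ D
      · have : f x = x := by simp [hf, hxD]
        rw [this] at hxf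
        subst hxf
        exact Finset.mem_insert_self _ _
      · have h : ∃ u ∈ D, G.Adj u x := hDdom x hxD
        have hfx : f x = h.choose := by simp [hf, hxD, dif_pos h]
        have hadj : G.Adj (f x) x := by rw [hfx]; exact h.choose_spec.2
        rw [hxf] at hadj
        exact Finset.mem_insert_of_mem (by rw [hN, Finset.mem_filter]; exact ⟨hxX, hadj⟩)
    have hNmem : ∀ x ∈ N, x ∈ X ∧ G.Adj d x := by
      intro x hx; rw [hN, Finset.mem_filter] at hx; exact hx
    -- no independent triple in N (claw-freeness at d)
    have hNindep : ∀ a ∈ N, ∀ b ∈ N, ∀ c ∈ N, a ≠ b → a ≠ c → b ≠ c →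
        ¬ (¬ G.Adj a b ∧ ¬ G.Adj a c ∧ ¬ G.Adj b c) := by
      rintro a ha b hb c hc hab hac hbc ⟨e1, e2, e3⟩
      apply hG
      refine ⟨d, {a, b, c}, ?_, ?_, ?_⟩
      · intro x hx
        simp only [Finset.mem_insert, Finset.mem_singleton] at hx
        rcases hx with rfl | rfl | rfl
        exacts [(hNmem _ ha).2, (hNmem _ hb).2, (hNmem _ hc).2]
      · intro x hx y hy hxy
        simp only [Finset.mem_insert, Finset.mem_singleton] at hx hy
        rcases hx with rfl | rfl | rfl <;> rcases hy with rfl | rfl | rfl <;>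
          first
            | exact absurd rfl hxy
            | exact e1 | exact e2 | exact e3
            | exact fun h => e1 h.symm | exact fun h => e2 h.symm | exact fun h => e3 h.symm
      · rw [Finset.card_insert_of_notMem (by simp [hab, hac]),
          Finset.card_insert_of_notMem (by simp [hbc]), Finset.card_singleton]
    by_cases hdX : d ∈ X
    · -- N is independent (triangle-freeness of X with d), hence |N| ≤ 2
      have hNind : ∀ a ∈ N, ∀ b ∈ N, a ≠ b → ¬ G.Adj a b := by
        intro a ha b hb hab hadj
        exact hX d hdX a (hNmem a ha).1 b (hNmem b hb).1 (hNmem a ha).2 hadj (hNmem b hb).2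
      have hN2 : N.card ≤ 2 := by
        by_contra hc
        push_neg at hc
        obtain ⟨a, ha, b, hb, c, hcm, hab, hac, hbc⟩ := three_of_card N hc
        exact hNindep a ha b hb c hcm hab hac hbc
          ⟨hNind a ha b hb hab, hNind a ha c hcm hac, hNind b hb c hcm hbc⟩
      calc F.card ≤ (insert d N).card := Finset.card_le_card hFsub
        _ ≤ N.card + 1 := Finset.card_insert_le _ _
        _ ≤ 5 := by omega
    · -- N has no triangle (X is triangle-free) and no independent triple: Ramsey
      have hFsub' : F ⊆ N := by
        intro x hx
        rcases Finset.mem_insert.mp (hFsub hx) with rfl | h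
        · exact absurd (Finset.mem_filter.mp hx).1 hdX
        · exact h
      have hN5 : N.card ≤ 5 := by
        apply ramsey33 G N _ hNindep
        rintro a ha b hb c hc hab hac hbc ⟨e1, e2, e3⟩
        exact hX a (hNmem a ha).1 b (hNmem b hb).1 c (hNmem c hc).1 e1 e3 e2
      exact le_trans (Finset.card_le_card hFsub') hN5
  calc X.card = ∑ d ∈ D, (X.filter (fun x => f x = d)).card := key
    _ ≤ ∑ _d ∈ D, 5 := Finset.sum_le_sum fiber_le
    _ = 5 * D.card := by rw [Finset.sum_const, smul_eq_mul, mul_comm]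
    _ = 5 * domNum G := by rw [hDcard]; rfl
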